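/- Let G be a finite simple graph, let e = {u,v} be an edge of G, and let G' be the subdivision of G at e, with new vertex w and new edges e₁ = {u,w} and e₂ = {w,v}. Then: (i) for every spanning 2-forest F of G with e ∈ F, the spanning subgraph of G' with edge set (E(F) \ {e}) ∪ {e₁, e₂} is a spanning 2-forest of G'; (ii) for every spanning 2-forest F of G with e ∉ F, both spanning subgraphs of G' with edge sets E(F) ∪ {e₁} and E(F) ∪ {e₂} are spanning 2-forests of G'; (iii) for every spanning tree T of G with e ∉ T, the spanning subgraph of G' with edge set E(T) is a spanning 2-forest of G' in which the new vertex w is an isolated connected component; (iv) every spanning 2-forest of G' arises in exactly one of these ways (those of type (i) contain both new edges, those of type (ii) contain exactly one, and those of type (iii) contain neither). Consequently these assignments define a bijection between the set of spanning 2-forests of G' and the disjoint union of the set of spanning 2-forests of G containing e, two copies of the set of spanning 2-forests of G not containing e, and the set of spanning trees of G not containing e. -/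

import Mathlib

open SimpleGraph

variable {V : Type*}

/-- The subdivision of a simple graph `G` at the edge `e = {u, v}`: the graph on the vertex
set `V ⊕ Unit` (the extra vertex `w = Sum.inr ()` is the new vertex) whose edges are all edges
of `G` except `e`, together with the two new edges `e₁ = {u, w}` and `e₂ = {w, v}`. -/
def subdiv (G : SimpleGraph V) (u v : V) : SimpleGraph (V ⊕ Unit) where
  Adj a b :=
    match a, b with
    | Sum.inl a, Sum.inl b => G.Adj a b ∧ s(a, b) ≠ s(u, v)
    | Sum.inl a, Sum.inr _ => a = u ∨ a = v
    | Sum.inr _, Sum.inl b => b = u ∨ b = v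
    | Sum.inr _, Sum.inr _ => False
  symm := by
    constructor
    rintro (a | a) (b | b) h
    · exact ⟨h.1.symm, fun hc => h.2 (by rw [Sym2.eq_swap]; exact hc)⟩
    · exact h
    · exact h
    · exact h
  loopless := by
    constructor
    rintro (a | a) h
    · exact G.loopless.irrefl a h.1
    · exact h

/-- The first new edge `e₁ = {u, w}` of the subdivision. -/
def newE₁ (u : V) : Sym2 (V ⊕ Unit) := s(Sum.inl u, Sum.inr ())

/-- The second new edge `e₂ = {w, v}` of the subdivision. -/
def newE₂ (v : V) : Sym2 (V ⊕ Unit) := s(Sum.inr (), Sum.inl v)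

/-- `T` is a spanning tree of `G`: a (spanning) subgraph on the full vertex set which is
connected and has no cycles. -/
def IsSpanTree {W : Type*} (G T : SimpleGraph W) : Prop := T ≤ G ∧ T.IsTree

/-- `F` is a spanning 2-forest of `G`: a (spanning) subgraph on the full vertex set which has
no cycles and exactly two connected components. -/
def IsSpanTwoForest {W : Type*} (G F : SimpleGraph W) : Prop :=
  F ≤ G ∧ F.IsAcyclic ∧ Nat.card F.ConnectedComponent = 2

/-- The spanning subgraph of the subdivision with edge set `(E(F) \ {e}) ∪ {e₁, e₂}`. -/
def forestIn (F : SimpleGraph V) (u v : V) : SimpleGraph (V ⊕ Unit) :=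
  fromEdgeSet ((Sym2.map Sum.inl '' (F.edgeSet \ {s(u, v)})) ∪ {newE₁ u, newE₂ v})

/-- The spanning subgraph of the subdivision with edge set `E(F) ∪ {e₁}`. -/
def forestOut₁ (F : SimpleGraph V) (u : V) : SimpleGraph (V ⊕ Unit) :=
  fromEdgeSet ((Sym2.map Sum.inl '' F.edgeSet) ∪ {newE₁ u})

/-- The spanning subgraph of the subdivision with edge set `E(F) ∪ {e₂}`. -/
def forestOut₂ (F : SimpleGraph V) (v : V) : SimpleGraph (V ⊕ Unit) :=
  fromEdgeSet ((Sym2.map Sum.inl '' F.edgeSet) ∪ {newE₂ v})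

/-- The spanning subgraph of the subdivision with edge set `E(T)` (the new vertex isolated). -/
def treeEmbed (T : SimpleGraph V) : SimpleGraph (V ⊕ Unit) :=
  fromEdgeSet (Sym2.map Sum.inl '' T.edgeSet)


private lemma reach_trans_lift {α β} {A : SimpleGraph α} {B : SimpleGraph β} (φ : α → β)
    (h : ∀ x y, A.Adj x y → B.Reachable (φ x) (φ y)) {x y : α}
    (hr : A.Reachable x y) : B.Reachable (φ x) (φ y) := by
  rw [reachable_iff_reflTransGen] at hr
  induction hr with
  | refl => exact Reachable.refl _
  | tail _ hadj ih => exact ih.trans (h _ _ hadj)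

private lemma cc_card_eq {α β} {A : SimpleGraph α} {B : SimpleGraph β}
    (φ : α → β) (ψ : β → α)
    (hφ : ∀ x y, A.Adj x y → B.Reachable (φ x) (φ y))
    (hψ : ∀ x y, B.Adj x y → A.Reachable (ψ x) (ψ y))
    (hA : ∀ x, A.Reachable (ψ (φ x)) x)
    (hB : ∀ y, B.Reachable (φ (ψ y)) y) :
    Nat.card A.ConnectedComponent = Nat.card B.ConnectedComponent := by
  apply Nat.card_congr
  refine ⟨Quot.lift (fun x => B.connectedComponentMk (φ x))
      (fun x y (h : A.Reachable x y) =>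
        ConnectedComponent.sound (reach_trans_lift φ hφ h)),
    Quot.lift (fun y => A.connectedComponentMk (ψ y))
      (fun x y (h : B.Reachable x y) =>
        ConnectedComponent.sound (reach_trans_lift ψ hψ h)), ?_, ?_⟩
  · intro c
    induction c using ConnectedComponent.ind with
    | _ x => exact ConnectedComponent.sound (hA x)
  · intro c
    induction c using ConnectedComponent.ind with
    | _ y => exact ConnectedComponent.sound (hB y)

private lemma isolated_reach {α} {A : SimpleGraph α} {x : α}
    (h : ∀ y, ¬ A.Adj x y) {y : α} (hr : A.Reachable x y) : x = y := by
  obtain ⟨p⟩ := hr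
  cases p with
  | nil => rfl
  | cons ha _ => exact absurd ha (h _)

private lemma mem_image_inl {S : Set (Sym2 V)} {a b : V} :
    s(Sum.inl a, Sum.inl b) ∈ Sym2.map (Sum.inl : V → V ⊕ Unit) '' S ↔ s(a, b) ∈ S := by
  constructor
  · rintro ⟨z, hz, hmap⟩
    have : z = s(a, b) := Sym2.map.injective Sum.inl_injective (by simpa using hmap)
    rwa [this] at hz
  · intro h
    exact ⟨s(a, b), h, by simp⟩

private lemma not_mem_image_inr {S : Set (Sym2 V)} {x : V ⊕ Unit} {t : Unit} :
    s(x, Sum.inr t) ∉ Sym2.map (Sum.inl : V → V ⊕ Unit) '' S := by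
  rintro ⟨z, hz, hmap⟩
  have : (Sum.inr t : V ⊕ Unit) ∈ Sym2.map Sum.inl z := by rw [hmap]; simp
  rw [Sym2.mem_map] at this
  obtain ⟨c, _, hc⟩ := this
  exact absurd hc (by simp)

private lemma card_cc_eq_one_iff {W : Type*} [Finite W] (H : SimpleGraph W) :
    Nat.card H.ConnectedComponent = 1 ↔ H.Connected := by
  rw [Nat.card_eq_one_iff_unique]
  constructor
  · rintro ⟨hs, ⟨c⟩⟩
    obtain ⟨x, -⟩ := c.exists_rep
    have hne : Nonempty W := ⟨x⟩
    exact ⟨fun a b => (ConnectedComponent.eq).mp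
      (@Subsingleton.elim _ hs (H.connectedComponentMk a) (H.connectedComponentMk b))⟩
  · intro hc
    have hne : Nonempty H.ConnectedComponent := ⟨H.connectedComponentMk hc.nonempty.some⟩
    refine ⟨⟨fun c d => ?_⟩, hne⟩
    induction c using ConnectedComponent.ind with
    | _ a =>
    induction d using ConnectedComponent.ind with
    | _ b => exact ConnectedComponent.sound (hc.preconnected a b)
private lemma mem_image_inr_iff {S : Set (Sym2 V)} {x : V ⊕ Unit} {t : Unit} :
    s(x, Sum.inr t) ∈ Sym2.map (Sum.inl : V → V ⊕ Unit) '' S ↔ False :=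
  iff_false_intro not_mem_image_inr

private lemma forestIn_adj_ll {F : SimpleGraph V} {u v a b : V} :
    (forestIn F u v).Adj (Sum.inl a) (Sum.inl b) ↔ F.Adj a b ∧ s(a, b) ≠ s(u, v) := by
  simp only [forestIn, fromEdgeSet_adj, Set.mem_union, Set.mem_insert_iff,
    Set.mem_singleton_iff, newE₁, newE₂, mem_image_inl, Set.mem_diff,
    Set.mem_singleton_iff, mem_edgeSet, Sym2.eq_iff, ne_eq, Sum.inl.injEq]
  constructor
  · rintro ⟨h, -⟩
    simp only [reduceCtorEq, and_false, false_and, or_false, false_or] at h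
    exact h
  · exact fun h => ⟨Or.inl h, h.1.ne⟩

private lemma forestIn_adj_lr {F : SimpleGraph V} {u v a : V} {t : Unit} :
    (forestIn F u v).Adj (Sum.inl a) (Sum.inr t) ↔ a = u ∨ a = v := by
  simp only [forestIn, fromEdgeSet_adj, Set.mem_union, Set.mem_insert_iff,
    Set.mem_singleton_iff, newE₁, newE₂, Sym2.eq_iff, ne_eq]
  constructor
  · rintro ⟨h, -⟩
    simpa only [mem_image_inr_iff, reduceCtorEq, false_and, and_false, and_true, or_false,
      false_or, Sum.inl.injEq] using h
  · intro h
    refine ⟨?_, by simp⟩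
    simpa only [mem_image_inr_iff, reduceCtorEq, false_and, and_false, and_true, or_false,
      false_or, Sum.inl.injEq] using h

private lemma forestIn_adj_rr {F : SimpleGraph V} {u v : V} {t s : Unit} :
    ¬ (forestIn F u v).Adj (Sum.inr t) (Sum.inr s) := by
  intro h
  exact (forestIn F u v).loopless.irrefl (Sum.inr t) (by cases t; cases s; exact h)

private lemma forestOut₁_adj_ll {F : SimpleGraph V} {u a b : V} :
    (forestOut₁ F u).Adj (Sum.inl a) (Sum.inl b) ↔ F.Adj a b := by
  simp only [forestOut₁, fromEdgeSet_adj, Set.mem_union, Set.mem_singleton_iff, newE₁,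
    mem_image_inl, mem_edgeSet, Sym2.eq_iff, ne_eq]
  constructor
  · rintro ⟨h, -⟩
    simpa only [reduceCtorEq, and_false, false_and, or_false, false_or] using h
  · exact fun h => ⟨Or.inl h, by simpa using h.ne⟩

private lemma forestOut₁_adj_lr {F : SimpleGraph V} {u a : V} {t : Unit} :
    (forestOut₁ F u).Adj (Sum.inl a) (Sum.inr t) ↔ a = u := by
  simp only [forestOut₁, fromEdgeSet_adj, Set.mem_union, Set.mem_singleton_iff, newE₁,
    Sym2.eq_iff, ne_eq]
  constructor
  · rintro ⟨h, -⟩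
    simpa only [mem_image_inr_iff, reduceCtorEq, false_and, and_false, and_true, or_false,
      false_or, Sum.inl.injEq] using h
  · rintro rfl
    exact ⟨Or.inr (by simp), by simp⟩

private lemma forestOut₁_adj_rr {F : SimpleGraph V} {u : V} {t s : Unit} :
    ¬ (forestOut₁ F u).Adj (Sum.inr t) (Sum.inr s) := by
  intro h
  exact (forestOut₁ F u).loopless.irrefl (Sum.inr t) (by cases t; cases s; exact h)

private lemma treeEmbed_adj_ll {T : SimpleGraph V} {a b : V} :
    (treeEmbed T).Adj (Sum.inl a) (Sum.inl b) ↔ T.Adj a b := by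
  simp only [treeEmbed, fromEdgeSet_adj, mem_image_inl, mem_edgeSet, ne_eq, Sum.inl.injEq]
  exact ⟨fun h => h.1, fun h => ⟨h, by simpa using h.ne⟩⟩

private lemma treeEmbed_adj_lr {T : SimpleGraph V} {a : V} {t : Unit} :
    ¬ (treeEmbed T).Adj (Sum.inl a) (Sum.inr t) := by
  intro h
  exact not_mem_image_inr h.1

private lemma treeEmbed_adj_rr {T : SimpleGraph V} {t s : Unit} :
    ¬ (treeEmbed T).Adj (Sum.inr t) (Sum.inr s) := by
  intro h
  exact (treeEmbed T).loopless.irrefl (Sum.inr t) (by cases t; cases s; exact h)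

private lemma forestOut₂_eq {F : SimpleGraph V} {v : V} :
    forestOut₂ F v = forestOut₁ F v := by
  unfold forestOut₂ forestOut₁ newE₁ newE₂
  rw [Sym2.eq_swap]

private lemma subdiv_comm {G : SimpleGraph V} {u v : V} :
    subdiv G u v = subdiv G v u := by
  ext (a | a) (b | b) <;> simp [subdiv, Sym2.eq_iff] <;> tauto
private lemma sdiff_single_adj {α} {A : SimpleGraph α} {e : Sym2 α} {p q : α} :
    (A.deleteEdges {e}).Adj p q ↔ A.Adj p q ∧ s(p, q) ≠ e := by
  simp only [deleteEdges, sdiff_adj, fromEdgeSet_adj, Set.mem_singleton_iff, not_and, ne_eq]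
  constructor
  · rintro ⟨h1, h2⟩
    exact ⟨h1, fun hc => (h2 hc) h1.ne⟩
  · rintro ⟨h1, h2⟩
    exact ⟨h1, fun hc => absurd hc h2⟩

private lemma inl_pair_ne {a b c d : V} (h : s(a, b) ≠ s(c, d)) :
    s(Sum.inl a, Sum.inl b) ≠ (s(Sum.inl c, Sum.inl d) : Sym2 (V ⊕ Unit)) := by
  intro hc
  refine h ?_
  rw [Sym2.eq_iff] at hc ⊢
  simpa [Sum.inl.injEq] using hc

private lemma acyclic_anti {α} {A B : SimpleGraph α} (h : A ≤ B) (hB : B.IsAcyclic) :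
    A.IsAcyclic := fun _ c hc => hB (c.mapLe h) (hc.mapLe h)

/-- The pullback of a graph on `V ⊕ Unit` to `V` along `Sum.inl`. -/
private def pull (F' : SimpleGraph (V ⊕ Unit)) : SimpleGraph V where
  Adj a b := F'.Adj (Sum.inl a) (Sum.inl b)
  symm := ⟨fun a b (h : F'.Adj (Sum.inl a) (Sum.inl b)) => h.symm⟩
  loopless := ⟨fun a (h : F'.Adj (Sum.inl a) (Sum.inl a)) => F'.loopless.irrefl _ h⟩

private lemma pull_adj {F' : SimpleGraph (V ⊕ Unit)} {a b : V} :
    (pull F').Adj a b ↔ F'.Adj (Sum.inl a) (Sum.inl b) := Iff.rfl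

private lemma pull_acyclic {F' : SimpleGraph (V ⊕ Unit)} (h : F'.IsAcyclic) :
    (pull F').IsAcyclic := fun _ c hc =>
  h (c.map ⟨Sum.inl, fun ha => ha⟩) (hc.map Sum.inl_injective)

private lemma pull_forestOut₁ {F : SimpleGraph V} {u : V} :
    pull (forestOut₁ F u) = F := by
  ext a b
  exact forestOut₁_adj_ll

private lemma pull_treeEmbed {T : SimpleGraph V} :
    pull (treeEmbed T) = T := by
  ext a b
  exact treeEmbed_adj_ll
private lemma cc_forestOut₁ {F : SimpleGraph V} {u : V} :
    Nat.card (forestOut₁ F u).ConnectedComponent = Nat.card F.ConnectedComponent := by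
  apply cc_card_eq (Sum.elim id fun _ => u) Sum.inl
  · rintro (a | a) (b | b) h
    · exact (forestOut₁_adj_ll.mp h).reachable
    · obtain rfl := forestOut₁_adj_lr.mp h
      exact Reachable.refl _
    · obtain rfl := forestOut₁_adj_lr.mp h.symm
      exact Reachable.refl _
    · exact absurd h forestOut₁_adj_rr
  · exact fun a b h => (forestOut₁_adj_ll.mpr h).reachable
  · rintro (a | t)
    · exact Reachable.refl _
    · exact (forestOut₁_adj_lr.mpr rfl).reachable
  · exact fun y => Reachable.refl _

private lemma acyclic_forestOut₁ {F : SimpleGraph V} {u : V} :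
    (forestOut₁ F u).IsAcyclic ↔ F.IsAcyclic := by
  constructor
  · intro hA
    rw [← pull_forestOut₁ (F := F) (u := u)]
    exact pull_acyclic hA
  · intro hF
    rw [isAcyclic_iff_forall_adj_isBridge]
    have key : ∀ (a : V), a = u → ∀ (t : Unit) (x : V ⊕ Unit),
        ¬ ((forestOut₁ F u).deleteEdges {s(Sum.inl a, Sum.inr t)}).Adj (Sum.inr t) x := by
      rintro a rfl t x h
      rw [sdiff_single_adj] at h
      obtain ⟨h1, h2⟩ := h
      match x with
      | Sum.inl c =>
          obtain rfl := forestOut₁_adj_lr.mp h1.symm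
          exact h2 (by rw [Sym2.eq_swap])
      | Sum.inr s => exact forestOut₁_adj_rr h1
    rintro (a | a) (b | b) hab
    · -- inl inl : image edge
      have h1 := forestOut₁_adj_ll.mp hab
      have hb := (isAcyclic_iff_forall_adj_isBridge.mp hF) h1
      rw [isBridge_iff] at hb
      refine isBridge_iff.mpr (fun hr => hb ?_)
      refine reach_trans_lift (Sum.elim id fun _ => u) (fun x y hxy => ?_) hr
      rw [sdiff_single_adj] at hxy
      obtain ⟨h2, h3⟩ := hxy
      match x, y with
      | Sum.inl c, Sum.inl d =>
          refine Adj.reachable ?_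
          rw [sdiff_single_adj]
          refine ⟨forestOut₁_adj_ll.mp h2, fun hc => h3 ?_⟩
          have hc' : s(c, d) = s(a, b) := by simpa using hc
          simpa using congrArg (Sym2.map (Sum.inl : V → V ⊕ Unit)) hc'
      | Sum.inl c, Sum.inr t =>
          obtain rfl := forestOut₁_adj_lr.mp h2
          exact Reachable.refl _
      | Sum.inr t, Sum.inl c =>
          obtain rfl := forestOut₁_adj_lr.mp h2.symm
          exact Reachable.refl _
      | Sum.inr t, Sum.inr s => exact absurd h2 forestOut₁_adj_rr
    · -- inl inr : edge e₁
      refine isBridge_iff.mpr (fun hr => ?_)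
      have := isolated_reach (key a (forestOut₁_adj_lr.mp hab) b) hr.symm
      simp at this
    · -- inr inl
      refine isBridge_iff.mpr (fun hr => ?_)
      have : (s(Sum.inr a, Sum.inl b) : Sym2 (V ⊕ Unit)) = s(Sum.inl b, Sum.inr a) :=
        Sym2.eq_swap
      rw [this] at hr
      have := isolated_reach (key b (forestOut₁_adj_lr.mp hab.symm) a) hr
      simp at this
    · exact absurd hab forestOut₁_adj_rr
private lemma reach_eq_of_adj {α β} {A : SimpleGraph α} (f : α → β)
    (h : ∀ x y, A.Adj x y → f x = f y) {x y : α} (hr : A.Reachable x y) : f x = f y := by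
  rw [reachable_iff_reflTransGen] at hr
  induction hr with
  | refl => rfl
  | tail _ hadj ih => exact ih.trans (h _ _ hadj)

private lemma isolated_treeEmbed {T : SimpleGraph V} (x : V ⊕ Unit) :
    ¬ (treeEmbed T).Adj (Sum.inr ()) x := by
  match x with
  | Sum.inl a => exact fun h => treeEmbed_adj_lr h.symm
  | Sum.inr t => exact treeEmbed_adj_rr

private lemma cc_treeEmbed [Finite V] {T : SimpleGraph V} :
    Nat.card (treeEmbed T).ConnectedComponent = Nat.card T.ConnectedComponent + 1 := by
  have e : (treeEmbed T).ConnectedComponent ≃ T.ConnectedComponent ⊕ Unit := by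
    refine ⟨Quot.lift (Sum.elim (fun a => Sum.inl (T.connectedComponentMk a))
        (fun _ => Sum.inr ())) (fun x y (hr : (treeEmbed T).Reachable x y) => ?_),
      Sum.elim (Quot.lift (fun a => (treeEmbed T).connectedComponentMk (Sum.inl a))
        (fun a b (hr : T.Reachable a b) => ConnectedComponent.sound
          (reach_trans_lift Sum.inl
            (fun x y hxy => ((treeEmbed_adj_ll).mpr hxy).reachable) hr)))
        (fun _ => (treeEmbed T).connectedComponentMk (Sum.inr ())), ?_, ?_⟩
    · refine reach_eq_of_adj _ (fun x y hxy => ?_) hr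
      match x, y with
      | Sum.inl a, Sum.inl b =>
          exact congrArg Sum.inl (ConnectedComponent.sound (treeEmbed_adj_ll.mp hxy).reachable)
      | Sum.inl a, Sum.inr t => exact absurd hxy treeEmbed_adj_lr
      | Sum.inr t, Sum.inl a => exact absurd hxy.symm treeEmbed_adj_lr
      | Sum.inr t, Sum.inr s => rfl
    · intro c
      induction c using ConnectedComponent.ind with
      | _ x =>
        match x with
        | Sum.inl a => rfl
        | Sum.inr () => rfl
    · rintro (c | t)
      · induction c using ConnectedComponent.ind with
        | _ a => rfl
      · cases t; rfl
  rw [Nat.card_congr e, Nat.card_sum]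
  simp

private lemma acyclic_treeEmbed {T : SimpleGraph V} :
    (treeEmbed T).IsAcyclic ↔ T.IsAcyclic := by
  constructor
  · intro hA
    rw [← pull_treeEmbed (T := T)]
    exact pull_acyclic hA
  · intro hT
    rw [isAcyclic_iff_forall_adj_isBridge]
    rintro (a | a) (b | b) hab
    · have h1 := treeEmbed_adj_ll.mp hab
      have hb := (isAcyclic_iff_forall_adj_isBridge.mp hT) h1
      rw [isBridge_iff] at hb
      refine isBridge_iff.mpr (fun hr => hb ?_)
      refine reach_trans_lift (Sum.elim id fun _ => a) (fun x y hxy => ?_) hr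
      rw [sdiff_single_adj] at hxy
      obtain ⟨h2, h3⟩ := hxy
      match x, y with
      | Sum.inl c, Sum.inl d =>
          refine Adj.reachable ?_
          rw [sdiff_single_adj]
          refine ⟨treeEmbed_adj_ll.mp h2, fun hc => h3 ?_⟩
          have hc' : s(c, d) = s(a, b) := by simpa using hc
          simpa using congrArg (Sym2.map (Sum.inl : V → V ⊕ Unit)) hc'
      | Sum.inl c, Sum.inr t => exact absurd h2 treeEmbed_adj_lr
      | Sum.inr t, Sum.inl c => exact absurd h2.symm treeEmbed_adj_lr
      | Sum.inr t, Sum.inr s => exact absurd h2 treeEmbed_adj_rr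
    · exact absurd hab treeEmbed_adj_lr
    · exact absurd hab.symm treeEmbed_adj_lr
    · exact absurd hab treeEmbed_adj_rr
private lemma forestIn_reach_of_adj {F : SimpleGraph V} {u v a b : V} (h : F.Adj a b) :
    (forestIn F u v).Reachable (Sum.inl a) (Sum.inl b) := by
  by_cases hc : s(a, b) = s(u, v)
  · rw [Sym2.eq_iff] at hc
    have ha : a = u ∨ a = v := by tauto
    have hb : b = u ∨ b = v := by tauto
    exact (((forestIn_adj_lr (t := ())).mpr ha).reachable).trans
      (((forestIn_adj_lr (t := ())).mpr hb).reachable).symm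
  · exact (forestIn_adj_ll.mpr ⟨h, hc⟩).reachable

private lemma cc_forestIn {F : SimpleGraph V} {u v : V} (hadj : F.Adj u v) :
    Nat.card (forestIn F u v).ConnectedComponent = Nat.card F.ConnectedComponent := by
  apply cc_card_eq (Sum.elim id fun _ => u) Sum.inl
  · rintro (a | a) (b | b) h
    · exact (forestIn_adj_ll.mp h).1.reachable
    · rcases forestIn_adj_lr.mp h with rfl | rfl
      · exact Reachable.refl _
      · exact hadj.symm.reachable
    · rcases forestIn_adj_lr.mp h.symm with rfl | rfl
      · exact Reachable.refl _
      · exact hadj.reachable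
    · exact absurd h forestIn_adj_rr
  · exact fun a b h => forestIn_reach_of_adj h
  · rintro (a | t)
    · exact Reachable.refl _
    · exact (forestIn_adj_lr.mpr (Or.inl rfl)).reachable
  · exact fun y => Reachable.refl _

private lemma acyclic_forestIn {F : SimpleGraph V} {u v : V} (hadj : F.Adj u v) :
    (forestIn F u v).IsAcyclic ↔ F.IsAcyclic := by
  have hne := hadj.ne
  constructor
  · intro hA
    rw [isAcyclic_iff_forall_adj_isBridge]
    intro a b hab
    by_cases hc : s(a, b) = s(u, v)
    · refine isBridge_iff.mpr (fun hr => ?_)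
      have hUV : ¬ (F.deleteEdges {s(u, v)}).Reachable u v := by
        intro hruv
        have hb := (isAcyclic_iff_forall_adj_isBridge.mp hA)
          (forestIn_adj_lr.mpr (Or.inl rfl) :
            (forestIn F u v).Adj (Sum.inl u) (Sum.inr ()))
        rw [isBridge_iff] at hb
        refine hb ?_
        have lift : ((forestIn F u v).deleteEdges
            {s(Sum.inl u, Sum.inr ())}).Reachable (Sum.inl u) (Sum.inl v) := by
          refine reach_trans_lift Sum.inl (fun x y hxy => ?_) hruv
          rw [sdiff_single_adj] at hxy
          refine Adj.reachable ?_
          rw [sdiff_single_adj]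
          exact ⟨forestIn_adj_ll.mpr ⟨hxy.1, hxy.2⟩, by simp⟩
        refine lift.trans (Adj.reachable ?_)
        rw [sdiff_single_adj]
        refine ⟨forestIn_adj_lr.mpr (Or.inr rfl), ?_⟩
        simp only [ne_eq, Sym2.eq_iff, Sum.inl.injEq, reduceCtorEq, and_true, false_and,
          and_false, or_false, false_or, not_false_eq_true]
        exact Ne.symm hne
      rw [hc] at hr
      rw [Sym2.eq_iff] at hc
      rcases hc with ⟨rfl, rfl⟩ | ⟨rfl, rfl⟩
      · exact hUV hr
      · exact hUV hr.symm
    · refine isBridge_iff.mpr (fun hr => ?_)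
      have hb := (isAcyclic_iff_forall_adj_isBridge.mp hA) (forestIn_adj_ll.mpr ⟨hab, hc⟩)
      rw [isBridge_iff] at hb
      refine hb ?_
      refine reach_trans_lift Sum.inl (fun x y hxy => ?_) hr
      rw [sdiff_single_adj] at hxy
      obtain ⟨h1, h2⟩ := hxy
      by_cases hxye : s(x, y) = s(u, v)
      · have hx : x = u ∨ x = v := by rw [Sym2.eq_iff] at hxye; tauto
        have hy : y = u ∨ y = v := by rw [Sym2.eq_iff] at hxye; tauto
        have r1 : ((forestIn F u v).deleteEdges
            {s(Sum.inl a, Sum.inl b)}).Adj (Sum.inl x) (Sum.inr ()) := by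
          rw [sdiff_single_adj]
          exact ⟨forestIn_adj_lr.mpr hx, by simp⟩
        have r2 : ((forestIn F u v).deleteEdges
            {s(Sum.inl a, Sum.inl b)}).Adj (Sum.inl y) (Sum.inr ()) := by
          rw [sdiff_single_adj]
          exact ⟨forestIn_adj_lr.mpr hy, by simp⟩
        exact r1.reachable.trans r2.reachable.symm
      · refine Adj.reachable ?_
        rw [sdiff_single_adj]
        exact ⟨forestIn_adj_ll.mpr ⟨h1, hxye⟩, inl_pair_ne h2⟩
  · intro hF
    rw [isAcyclic_iff_forall_adj_isBridge]
    have hFb := isAcyclic_iff_forall_adj_isBridge.mp hF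
    have lrcase : ∀ (a : V) (t : Unit), (forestIn F u v).Adj (Sum.inl a) (Sum.inr t) →
        ¬ ((forestIn F u v).deleteEdges
            {s(Sum.inl a, Sum.inr t)}).Reachable (Sum.inl a) (Sum.inr t) := by
      rintro a ⟨⟩ hab hr
      have hb := hFb hadj
      rw [isBridge_iff] at hb
      rcases forestIn_adj_lr.mp hab with rfl | rfl
      · refine hb ?_
        refine reach_trans_lift (Sum.elim id fun _ => v) (fun x y hxy => ?_) hr
        rw [sdiff_single_adj] at hxy
        obtain ⟨h1, h2⟩ := hxy
        match x, y with
        | Sum.inl c, Sum.inl d =>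
            refine Adj.reachable ?_
            rw [sdiff_single_adj]
            exact forestIn_adj_ll.mp h1
        | Sum.inl c, Sum.inr t' =>
            rcases forestIn_adj_lr.mp h1 with rfl | rfl
            · cases t'; exact absurd rfl h2
            · exact Reachable.refl _
        | Sum.inr t', Sum.inl c =>
            rcases forestIn_adj_lr.mp h1.symm with rfl | rfl
            · cases t'; exact absurd (Sym2.eq_swap) h2
            · exact Reachable.refl _
        | Sum.inr t', Sum.inr s' => exact absurd h1 forestIn_adj_rr
      · refine hb (Reachable.symm ?_)
        refine reach_trans_lift (Sum.elim id fun _ => u) (fun x y hxy => ?_) hr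
        rw [sdiff_single_adj] at hxy
        obtain ⟨h1, h2⟩ := hxy
        match x, y with
        | Sum.inl c, Sum.inl d =>
            refine Adj.reachable ?_
            rw [sdiff_single_adj]
            exact forestIn_adj_ll.mp h1
        | Sum.inl c, Sum.inr t' =>
            rcases forestIn_adj_lr.mp h1 with rfl | rfl
            · exact Reachable.refl _
            · cases t'; exact absurd rfl h2
        | Sum.inr t', Sum.inl c =>
            rcases forestIn_adj_lr.mp h1.symm with rfl | rfl
            · exact Reachable.refl _
            · cases t'; exact absurd (Sym2.eq_swap) h2
        | Sum.inr t', Sum.inr s' => exact absurd h1 forestIn_adj_rr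
    rintro (a | a) (b | b) hab
    · obtain ⟨h1, h2⟩ := forestIn_adj_ll.mp hab
      have hb := hFb h1
      rw [isBridge_iff] at hb
      refine isBridge_iff.mpr (fun hr => hb ?_)
      refine reach_trans_lift (Sum.elim id fun _ => u) (fun x y hxy => ?_) hr
      rw [sdiff_single_adj] at hxy
      obtain ⟨h3, h4⟩ := hxy
      match x, y with
      | Sum.inl c, Sum.inl d =>
          refine Adj.reachable ?_
          rw [sdiff_single_adj]
          refine ⟨(forestIn_adj_ll.mp h3).1, fun hcd => h4 ?_⟩
          have hc' : s(c, d) = s(a, b) := by simpa using hcd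
          simpa using congrArg (Sym2.map (Sum.inl : V → V ⊕ Unit)) hc'
      | Sum.inl c, Sum.inr t' =>
          rcases forestIn_adj_lr.mp h3 with rfl | rfl
          · exact Reachable.refl _
          · refine Reachable.symm (Adj.reachable ?_)
            rw [sdiff_single_adj]
            exact ⟨hadj, fun hcd => h2 hcd.symm⟩
      | Sum.inr t', Sum.inl c =>
          rcases forestIn_adj_lr.mp h3.symm with rfl | rfl
          · exact Reachable.refl _
          · refine Adj.reachable ?_
            rw [sdiff_single_adj]
            exact ⟨hadj, fun hcd => h2 hcd.symm⟩
      | Sum.inr t', Sum.inr s' => exact absurd h3 forestIn_adj_rr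
    · exact isBridge_iff.mpr (lrcase a b hab)
    · rw [Sym2.eq_swap]
      exact isBridge_iff.mpr (fun hr => lrcase b a hab.symm hr)
    · exact absurd hab forestIn_adj_rr
private lemma subdiv_adj_rr {G : SimpleGraph V} {u v : V} {t s : Unit} :
    ¬ (subdiv G u v).Adj (Sum.inr t) (Sum.inr s) := fun h => h

private lemma adj_of_pair_eq {F : SimpleGraph V} {a b u v : V} (h : F.Adj u v)
    (hc : s(u, v) = s(a, b)) : F.Adj a b := by
  rw [Sym2.eq_iff] at hc
  rcases hc with ⟨rfl, rfl⟩ | ⟨rfl, rfl⟩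
  · exact h
  · exact h.symm

private lemma single_edge_le {G : SimpleGraph V} {u v : V} (he : G.Adj u v) :
    fromEdgeSet {s(u, v)} ≤ G := by
  intro p q h
  rw [fromEdgeSet_adj] at h
  exact adj_of_pair_eq he h.1.symm

private lemma forestIn_le {G F : SimpleGraph V} {u v : V} (hFG : F ≤ G) :
    forestIn F u v ≤ subdiv G u v := by
  rintro (a | a) (b | b) h
  · obtain ⟨h1, h2⟩ := forestIn_adj_ll.mp h
    exact ⟨hFG h1, h2⟩
  · exact forestIn_adj_lr.mp h
  · exact forestIn_adj_lr.mp h.symm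
  · exact absurd h forestIn_adj_rr

private lemma forestOut₁_le_left {G F : SimpleGraph V} {u v : V} (hFG : F ≤ G)
    (he : ¬ F.Adj u v) : forestOut₁ F u ≤ subdiv G u v := by
  rintro (a | a) (b | b) h
  · have h1 := forestOut₁_adj_ll.mp h
    exact ⟨hFG h1, fun hc => he (adj_of_pair_eq h1 hc)⟩
  · exact Or.inl (forestOut₁_adj_lr.mp h)
  · exact Or.inl (forestOut₁_adj_lr.mp h.symm)
  · exact absurd h forestOut₁_adj_rr

private lemma forestOut₁_le_right {G F : SimpleGraph V} {u v : V} (hFG : F ≤ G)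
    (he : ¬ F.Adj u v) : forestOut₁ F v ≤ subdiv G u v := by
  rw [subdiv_comm]
  exact forestOut₁_le_left hFG (fun h => he h.symm)

private lemma treeEmbed_le {G T : SimpleGraph V} {u v : V} (hTG : T ≤ G)
    (he : ¬ T.Adj u v) : treeEmbed T ≤ subdiv G u v := by
  rintro (a | a) (b | b) h
  · have h1 := treeEmbed_adj_ll.mp h
    exact ⟨hTG h1, fun hc => he (adj_of_pair_eq h1 hc)⟩
  · exact absurd h treeEmbed_adj_lr
  · exact absurd h.symm treeEmbed_adj_lr
  · exact absurd h treeEmbed_adj_rr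

private lemma span_forestIn [Fintype V] {G F : SimpleGraph V} {u v : V}
    (hF : IsSpanTwoForest G F) (he : F.Adj u v) :
    IsSpanTwoForest (subdiv G u v) (forestIn F u v) :=
  ⟨forestIn_le hF.1, (acyclic_forestIn he).mpr hF.2.1, by
    rw [cc_forestIn he]; exact hF.2.2⟩

private lemma span_forestOut₁ [Fintype V] {G F : SimpleGraph V} {u v : V}
    (hF : IsSpanTwoForest G F) (he : ¬ F.Adj u v) :
    IsSpanTwoForest (subdiv G u v) (forestOut₁ F u) :=
  ⟨forestOut₁_le_left hF.1 he, acyclic_forestOut₁.mpr hF.2.1, by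
    rw [cc_forestOut₁]; exact hF.2.2⟩

private lemma span_forestOut₂ [Fintype V] {G F : SimpleGraph V} {u v : V}
    (hF : IsSpanTwoForest G F) (he : ¬ F.Adj u v) :
    IsSpanTwoForest (subdiv G u v) (forestOut₂ F v) := by
  rw [forestOut₂_eq]
  exact ⟨forestOut₁_le_right hF.1 he, acyclic_forestOut₁.mpr hF.2.1, by
    rw [cc_forestOut₁]; exact hF.2.2⟩

private lemma span_treeEmbed [Fintype V] {G T : SimpleGraph V} {u v : V}
    (hT : IsSpanTree G T) (he : ¬ T.Adj u v) :
    IsSpanTwoForest (subdiv G u v) (treeEmbed T) :=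
  ⟨treeEmbed_le hT.1 he, acyclic_treeEmbed.mpr hT.2.IsAcyclic, by
    rw [cc_treeEmbed, (card_cc_eq_one_iff T).mpr hT.2.isConnected]⟩

section recon

variable {G : SimpleGraph V} {u v : V} {F' : SimpleGraph (V ⊕ Unit)}

private lemma pull_le (hle : F' ≤ subdiv G u v) : pull F' ≤ G :=
  fun _ _ h => (hle h).1

private lemma pull_not_adj (hle : F' ≤ subdiv G u v) : ¬ (pull F').Adj u v :=
  fun h => (hle h).2 rfl

private lemma recon_in (hle : F' ≤ subdiv G u v) (hne : u ≠ v)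
    (h1 : F'.Adj (Sum.inl u) (Sum.inr ())) (h2 : F'.Adj (Sum.inr ()) (Sum.inl v)) :
    forestIn (pull F' ⊔ fromEdgeSet {s(u, v)}) u v = F' := by
  ext (a | a) (b | b)
  · rw [forestIn_adj_ll]
    constructor
    · rintro ⟨h3 | h3, h4⟩
      · exact h3
      · rw [fromEdgeSet_adj] at h3
        exact absurd h3.1 h4
    · intro h3
      exact ⟨Or.inl h3, (hle h3).2⟩
  · rw [forestIn_adj_lr]
    constructor
    · rintro (rfl | rfl)
      · cases b; exact h1
      · cases b; exact h2.symm
    · intro h3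
      exact hle h3
  · constructor
    · intro h3
      rcases forestIn_adj_lr.mp h3.symm with rfl | rfl
      · cases a; exact h1.symm
      · cases a; exact h2
    · intro h3
      exact (forestIn_adj_lr.mpr (hle h3.symm)).symm
  · constructor
    · intro h3
      exact absurd h3 forestIn_adj_rr
    · intro h3
      exact absurd (hle h3) subdiv_adj_rr

private lemma recon_out₁ (hle : F' ≤ subdiv G u v)
    (h1 : F'.Adj (Sum.inl u) (Sum.inr ())) (h2 : ¬ F'.Adj (Sum.inr ()) (Sum.inl v)) :
    forestOut₁ (pull F') u = F' := by
  ext (a | a) (b | b)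
  · exact forestOut₁_adj_ll
  · rw [forestOut₁_adj_lr]
    constructor
    · rintro rfl
      cases b; exact h1
    · intro h3
      rcases (hle h3 : _ ∨ _) with rfl | rfl
      · rfl
      · cases b; exact absurd h3.symm h2
  · constructor
    · intro h3
      obtain rfl := forestOut₁_adj_lr.mp h3.symm
      cases a; exact h1.symm
    · intro h3
      refine (forestOut₁_adj_lr.mpr ?_).symm
      rcases (hle h3.symm : _ ∨ _) with rfl | rfl
      · rfl
      · cases a; exact absurd h3 h2
  · constructor
    · intro h3
      exact absurd h3 forestOut₁_adj_rr
    · intro h3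
      exact absurd (hle h3) subdiv_adj_rr

private lemma recon_out₂ (hle : F' ≤ subdiv G u v)
    (h1 : ¬ F'.Adj (Sum.inl u) (Sum.inr ())) (h2 : F'.Adj (Sum.inr ()) (Sum.inl v)) :
    forestOut₂ (pull F') v = F' := by
  rw [forestOut₂_eq]
  ext (a | a) (b | b)
  · exact forestOut₁_adj_ll
  · rw [forestOut₁_adj_lr]
    constructor
    · rintro rfl
      cases b; exact h2.symm
    · intro h3
      rcases (hle h3 : _ ∨ _) with rfl | rfl
      · cases b; exact absurd h3 h1
      · rfl
  · constructor
    · intro h3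
      obtain rfl := forestOut₁_adj_lr.mp h3.symm
      cases a; exact h2
    · intro h3
      refine (forestOut₁_adj_lr.mpr ?_).symm
      rcases (hle h3.symm : _ ∨ _) with rfl | rfl
      · cases a; exact absurd h3.symm h1
      · rfl
  · constructor
    · intro h3
      exact absurd h3 forestOut₁_adj_rr
    · intro h3
      exact absurd (hle h3) subdiv_adj_rr

private lemma recon_tree (hle : F' ≤ subdiv G u v)
    (h1 : ¬ F'.Adj (Sum.inl u) (Sum.inr ())) (h2 : ¬ F'.Adj (Sum.inr ()) (Sum.inl v)) :
    treeEmbed (pull F') = F' := by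
  ext (a | a) (b | b)
  · exact treeEmbed_adj_ll
  · constructor
    · intro h3
      exact absurd h3 treeEmbed_adj_lr
    · intro h3
      rcases (hle h3 : _ ∨ _) with rfl | rfl
      · cases b; exact absurd h3 h1
      · cases b; exact absurd h3.symm h2
  · constructor
    · intro h3
      exact absurd h3.symm treeEmbed_adj_lr
    · intro h3
      rcases (hle h3.symm : _ ∨ _) with rfl | rfl
      · cases a; exact absurd h3.symm h1
      · cases a; exact absurd h3 h2
  · constructor
    · intro h3
      exact absurd h3 treeEmbed_adj_rr
    · intro h3
      exact absurd (hle h3) subdiv_adj_rr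

end recon

private lemma det_in {F F₂ : SimpleGraph V} {u v : V} (h1 : F.Adj u v) (h2 : F₂.Adj u v)
    (hval : forestIn F u v = forestIn F₂ u v) : F = F₂ := by
  ext a b
  by_cases hc : s(a, b) = s(u, v)
  · exact ⟨fun _ => adj_of_pair_eq h2 hc.symm, fun _ => adj_of_pair_eq h1 hc.symm⟩
  · constructor
    · intro h
      have := forestIn_adj_ll.mpr ⟨h, hc⟩
      rw [hval] at this
      exact (forestIn_adj_ll.mp this).1
    · intro h
      have := forestIn_adj_ll.mpr ⟨h, hc⟩
      rw [← hval] at this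
      exact (forestIn_adj_ll.mp this).1

private lemma det_out {F F₂ : SimpleGraph V} {u : V}
    (hval : forestOut₁ F u = forestOut₁ F₂ u) : F = F₂ := by
  ext a b
  constructor
  · intro h
    have := (forestOut₁_adj_ll (u := u)).mpr h
    rw [hval] at this
    exact forestOut₁_adj_ll.mp this
  · intro h
    have := (forestOut₁_adj_ll (u := u)).mpr h
    rw [← hval] at this
    exact forestOut₁_adj_ll.mp this

private lemma det_tree {T T₂ : SimpleGraph V}
    (hval : treeEmbed T = treeEmbed T₂) : T = T₂ := by
  ext a b
  constructor
  · intro h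
    have := treeEmbed_adj_ll.mpr h
    rw [hval] at this
    exact treeEmbed_adj_ll.mp this
  · intro h
    have := treeEmbed_adj_ll.mpr h
    rw [← hval] at this
    exact treeEmbed_adj_ll.mp this
/-- Subdividing an edge of a finite simple graph: spanning 2-forests of the subdivision
correspond bijectively to spanning 2-forests of `G` containing `e`, two copies of the spanning
2-forests of `G` not containing `e`, and the spanning trees of `G` not containing `e`. -/
theorem subdivision_spanning_two_forests [Fintype V] (G : SimpleGraph V) (u v : V)
    (he : G.Adj u v) :
    (∀ F : SimpleGraph V, IsSpanTwoForest G F → s(u, v) ∈ F.edgeSet →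
      IsSpanTwoForest (subdiv G u v) (forestIn F u v)) ∧
    (∀ F : SimpleGraph V, IsSpanTwoForest G F → s(u, v) ∉ F.edgeSet →
      IsSpanTwoForest (subdiv G u v) (forestOut₁ F u) ∧
      IsSpanTwoForest (subdiv G u v) (forestOut₂ F v)) ∧
    (∀ T : SimpleGraph V, IsSpanTree G T → s(u, v) ∉ T.edgeSet →
      IsSpanTwoForest (subdiv G u v) (treeEmbed T) ∧
      ∀ x : V ⊕ Unit, ¬ (treeEmbed T).Adj (Sum.inr ()) x) ∧
    ∃ Φ : ({F : SimpleGraph V // IsSpanTwoForest G F ∧ s(u, v) ∈ F.edgeSet} ⊕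
            {F : SimpleGraph V // IsSpanTwoForest G F ∧ s(u, v) ∉ F.edgeSet} ⊕
            {F : SimpleGraph V // IsSpanTwoForest G F ∧ s(u, v) ∉ F.edgeSet} ⊕
            {T : SimpleGraph V // IsSpanTree G T ∧ s(u, v) ∉ T.edgeSet}) ≃
          {F' : SimpleGraph (V ⊕ Unit) // IsSpanTwoForest (subdiv G u v) F'},
      (∀ F, (Φ (Sum.inl F) : SimpleGraph (V ⊕ Unit)) = forestIn F.val u v) ∧
      (∀ F, (Φ (Sum.inr (Sum.inl F)) : SimpleGraph (V ⊕ Unit)) = forestOut₁ F.val u) ∧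
      (∀ F, (Φ (Sum.inr (Sum.inr (Sum.inl F))) : SimpleGraph (V ⊕ Unit)) = forestOut₂ F.val v) ∧
      (∀ T, (Φ (Sum.inr (Sum.inr (Sum.inr T))) : SimpleGraph (V ⊕ Unit)) = treeEmbed T.val) := by
  classical
  have hne : u ≠ v := he.ne
  refine ⟨fun F hF hm => span_forestIn hF ((mem_edgeSet _).mp hm),
    fun F hF hm => ⟨span_forestOut₁ hF (fun h => hm ((mem_edgeSet _).mpr h)),
      span_forestOut₂ hF (fun h => hm ((mem_edgeSet _).mpr h))⟩,
    fun T hT hm => ⟨span_treeEmbed hT (fun h => hm ((mem_edgeSet _).mpr h)),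
      fun x => isolated_treeEmbed x⟩, ?_⟩
  refine ⟨Equiv.ofBijective (fun x =>
    match x with
    | Sum.inl F => ⟨forestIn F.1 u v, span_forestIn F.2.1 ((mem_edgeSet _).mp F.2.2)⟩
    | Sum.inr (Sum.inl F) => ⟨forestOut₁ F.1 u,
        span_forestOut₁ F.2.1 (fun h => F.2.2 ((mem_edgeSet _).mpr h))⟩
    | Sum.inr (Sum.inr (Sum.inl F)) => ⟨forestOut₂ F.1 v,
        span_forestOut₂ F.2.1 (fun h => F.2.2 ((mem_edgeSet _).mpr h))⟩
    | Sum.inr (Sum.inr (Sum.inr T)) => ⟨treeEmbed T.1,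
        span_treeEmbed T.2.1 (fun h => T.2.2 ((mem_edgeSet _).mpr h))⟩)
    ⟨?_, ?_⟩, fun F => rfl, fun F => rfl, fun F => rfl, fun T => rfl⟩
  · -- injectivity
    intro x y hxy
    rcases x with F1 | F1 | F1 | T1 <;> rcases y with F2 | F2 | F2 | T2 <;>
      have hval := congrArg Subtype.val hxy <;>
      dsimp only at hval <;>
      try simp only [forestOut₂_eq] at hval
    · exact congrArg Sum.inl (Subtype.ext
        (det_in ((mem_edgeSet _).mp F1.2.2) ((mem_edgeSet _).mp F2.2.2) hval))
    · have m := (forestIn_adj_lr (F := F1.1) (u := u) (v := v) (t := ())).mpr (Or.inr rfl)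
      rw [hval] at m
      exact absurd (forestOut₁_adj_lr.mp m) (fun hh => hne hh.symm)
    · have m := (forestIn_adj_lr (F := F1.1) (u := u) (v := v) (t := ())).mpr (Or.inl rfl)
      rw [hval] at m
      exact absurd (forestOut₁_adj_lr.mp m) hne
    · have m := (forestIn_adj_lr (F := F1.1) (u := u) (v := v) (t := ())).mpr (Or.inl rfl)
      rw [hval] at m
      exact absurd m treeEmbed_adj_lr
    · have m := (forestIn_adj_lr (F := F2.1) (u := u) (v := v) (t := ())).mpr (Or.inr rfl)
      rw [← hval] at m
      exact absurd (forestOut₁_adj_lr.mp m) (fun hh => hne hh.symm)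
    · exact congrArg (fun z => Sum.inr (Sum.inl z)) (Subtype.ext (det_out hval))
    · have m := (forestOut₁_adj_lr (F := F1.1) (u := u) (t := ())).mpr rfl
      rw [hval] at m
      exact absurd (forestOut₁_adj_lr.mp m) hne
    · have m := (forestOut₁_adj_lr (F := F1.1) (u := u) (t := ())).mpr rfl
      rw [hval] at m
      exact absurd m treeEmbed_adj_lr
    · have m := (forestIn_adj_lr (F := F2.1) (u := u) (v := v) (t := ())).mpr (Or.inl rfl)
      rw [← hval] at m
      exact absurd (forestOut₁_adj_lr.mp m) hne
    · have m := (forestOut₁_adj_lr (F := F2.1) (u := u) (t := ())).mpr rfl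
      rw [← hval] at m
      exact absurd (forestOut₁_adj_lr.mp m) hne
    · exact congrArg (fun z => Sum.inr (Sum.inr (Sum.inl z))) (Subtype.ext (det_out hval))
    · have m := (forestOut₁_adj_lr (F := F1.1) (u := v) (t := ())).mpr rfl
      rw [hval] at m
      exact absurd m treeEmbed_adj_lr
    · have m := (forestIn_adj_lr (F := F2.1) (u := u) (v := v) (t := ())).mpr (Or.inl rfl)
      rw [← hval] at m
      exact absurd m treeEmbed_adj_lr
    · have m := (forestOut₁_adj_lr (F := F2.1) (u := u) (t := ())).mpr rfl
      rw [← hval] at m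
      exact absurd m treeEmbed_adj_lr
    · have m := (forestOut₁_adj_lr (F := F2.1) (u := v) (t := ())).mpr rfl
      rw [← hval] at m
      exact absurd m treeEmbed_adj_lr
    · exact congrArg (fun z => Sum.inr (Sum.inr (Sum.inr z))) (Subtype.ext (det_tree hval))
  · -- surjectivity
    rintro ⟨F', hF'⟩
    have hle := hF'.1
    by_cases c1 : F'.Adj (Sum.inl u) (Sum.inr ())
    · by_cases c2 : F'.Adj (Sum.inr ()) (Sum.inl v)
      · have hrec := recon_in hle hne c1 c2
        have hFadj : (pull F' ⊔ fromEdgeSet {s(u, v)}).Adj u v :=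
          Or.inr ((fromEdgeSet_adj _).mpr ⟨rfl, hne⟩)
        have hsp : IsSpanTwoForest G (pull F' ⊔ fromEdgeSet {s(u, v)}) := by
          refine ⟨sup_le (pull_le hle) (single_edge_le he), ?_, ?_⟩
          · exact (acyclic_forestIn hFadj).mp (by rw [hrec]; exact hF'.2.1)
          · rw [← cc_forestIn hFadj, hrec]
            exact hF'.2.2
        exact ⟨Sum.inl ⟨_, hsp, (mem_edgeSet _).mpr hFadj⟩, Subtype.ext hrec⟩
      · have hrec := recon_out₁ hle c1 c2
        have hsp : IsSpanTwoForest G (pull F') := by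
          refine ⟨pull_le hle, ?_, ?_⟩
          · exact acyclic_forestOut₁.mp (by rw [hrec]; exact hF'.2.1)
          · rw [← cc_forestOut₁ (u := u), hrec]
            exact hF'.2.2
        exact ⟨Sum.inr (Sum.inl ⟨_, hsp, fun hm => pull_not_adj hle ((mem_edgeSet _).mp hm)⟩),
          Subtype.ext hrec⟩
    · by_cases c2 : F'.Adj (Sum.inr ()) (Sum.inl v)
      · have hrec := recon_out₂ hle c1 c2
        have hrec' : forestOut₁ (pull F') v = F' := by
          rw [← forestOut₂_eq]; exact hrec
        have hsp : IsSpanTwoForest G (pull F') := by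
          refine ⟨pull_le hle, ?_, ?_⟩
          · exact acyclic_forestOut₁.mp (by rw [hrec']; exact hF'.2.1)
          · rw [← cc_forestOut₁ (u := v), hrec']
            exact hF'.2.2
        exact ⟨Sum.inr (Sum.inr (Sum.inl ⟨_, hsp,
          fun hm => pull_not_adj hle ((mem_edgeSet _).mp hm)⟩)), Subtype.ext hrec⟩
      · have hrec := recon_tree hle c1 c2
        have hcon : Nat.card (pull F').ConnectedComponent = 1 := by
          have h2 := cc_treeEmbed (T := pull F')
          rw [hrec, hF'.2.2] at h2
          omega
        have hsp : IsSpanTree G (pull F') :=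
          ⟨pull_le hle, ⟨(card_cc_eq_one_iff _).mp hcon,
            acyclic_treeEmbed.mp (by rw [hrec]; exact hF'.2.1)⟩⟩
        exact ⟨Sum.inr (Sum.inr (Sum.inr ⟨_, hsp,
          fun hm => pull_not_adj hle ((mem_edgeSet _).mp hm)⟩)), Subtype.ext hrec⟩
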